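/- Approximation template: if g : Y → ℝ is continuous and H is a path deformation retraction of X in Y, then d_I(Rb(Y,g), Rb(X, g|_X)) ≤ ‖g − g∘h₁‖_∞, where the distance is the interleaving distance between the Reeb precosheaves of the Reeb graphs. -/

import Mathlib

open CategoryTheory Set
open scoped NNReal ENNReal

/-- The Reeb relation of `f : X → ℝ`: `x ∼_f y` iff `y` lies in the connected
component of `x` inside the level set `f ⁻¹' {f x}`. -/
def ReebRel {X : Type*} [TopologicalSpace X] (f : X → ℝ) (x y : X) : Prop :=
  y ∈ connectedComponentIn (f ⁻¹' {f x}) x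

theorem ReebRel.apply_eq {X : Type*} [TopologicalSpace X] {f : X → ℝ} {x y : X}
    (h : ReebRel f x y) : f x = f y :=
  (show f y = f x from connectedComponentIn_subset (f ⁻¹' {f x}) x h).symm

/-- The function induced by `f` on the Reeb quotient. -/
def reebTilde {X : Type*} [TopologicalSpace X] (f : X → ℝ) : Quot (ReebRel f) → ℝ :=
  Quot.lift f fun _ _ h => h.apply_eq

/-- The poset of nonempty open intervals `(a, b)` of `ℝ`, ordered by inclusion. -/
def RInt : Type := {p : ℝ × ℝ // p.1 < p.2}

namespace RInt

instance : Preorder RInt where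
  le I J := J.1.1 ≤ I.1.1 ∧ I.1.2 ≤ J.1.2
  le_refl I := ⟨le_refl _, le_refl _⟩
  le_trans I J K h h' := ⟨h'.1.trans h.1, h.2.trans h'.2⟩

/-- The underlying open interval `(a, b) ⊆ ℝ`. -/
def set (I : RInt) : Set ℝ := Set.Ioo I.1.1 I.1.2

theorem set_mono {I J : RInt} (h : I ≤ J) : I.set ⊆ J.set :=
  Set.Ioo_subset_Ioo h.1 h.2

/-- The `δ`-thickening `(a - δ, b + δ)` of the open interval `(a, b)`. -/
def widen (δ : ℝ≥0) (I : RInt) : RInt :=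
  ⟨(I.1.1 - δ, I.1.2 + δ), by
    have h := I.2
    have h0 : (0 : ℝ) ≤ δ := δ.2
    dsimp only
    linarith⟩

theorem widen_mono (δ : ℝ≥0) : Monotone (widen δ) := by
  intro I J h
  exact ⟨by dsimp [widen]; linarith [h.1], by dsimp [widen]; linarith [h.2]⟩

theorem le_widen (δ : ℝ≥0) (I : RInt) : I ≤ widen δ I := by
  have h0 : (0 : ℝ) ≤ δ := δ.2
  exact ⟨by dsimp [widen]; linarith, by dsimp [widen]; linarith⟩

end RInt

/-- The widening functor `ω_δ` sending `(a, b)` to `(a - δ, b + δ)`. -/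
def widenFunctor (δ : ℝ≥0) : RInt ⥤ RInt := (RInt.widen_mono δ).functor

/-- Two functors `C, D : Int ⥤ 𝒜` are `δ`-interleaved if there are natural
transformations `Φ : C ⟶ D ∘ ω_δ` and `Ψ : D ⟶ C ∘ ω_δ` whose composites are
the maps induced by the inclusions `I ⊆ ω_δ (ω_δ I) = ω_{2δ} I`. -/
def IsInterleaving {A : Type*} [Category A] (δ : ℝ≥0) (C D : RInt ⥤ A) : Prop :=
  ∃ (Φ : C ⟶ widenFunctor δ ⋙ D) (Ψ : D ⟶ widenFunctor δ ⋙ C),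
    (∀ I : RInt, Φ.app I ≫ Ψ.app ((widenFunctor δ).obj I) =
      C.map (homOfLE ((RInt.le_widen δ I).trans (RInt.le_widen δ (RInt.widen δ I))))) ∧
    (∀ I : RInt, Ψ.app I ≫ Φ.app ((widenFunctor δ).obj I) =
      D.map (homOfLE ((RInt.le_widen δ I).trans (RInt.le_widen δ (RInt.widen δ I)))))

/-- The interleaving distance between two functors on the poset of open intervals. -/
noncomputable def interleavingDist {A : Type*} [Category A] (C D : RInt ⥤ A) : ℝ≥0∞ :=
  ⨅ (δ : ℝ≥0) (_ : IsInterleaving δ C D), (δ : ℝ≥0∞)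

/-- The Reeb precosheaf `𝒟(X, f)`, sending an open interval `I` to the set of
connected components of `f ⁻¹' I`, with maps induced by inclusions. -/
def reebPrecosheaf {X : Type u} [TopologicalSpace X] (f : X → ℝ) : RInt ⥤ Type u where
  obj I := ConnectedComponents ↥(f ⁻¹' I.set)
  map {I J} h :=
    TypeCat.ofHom
      (continuous_inclusion (Set.preimage_mono (RInt.set_mono h.le))).connectedComponentsMap
  map_id I := by
    ext c
    obtain ⟨x, rfl⟩ := ConnectedComponents.surjective_coe c
    rfl
  map_comp {I J K} h h' := by
    ext c
    obtain ⟨x, rfl⟩ := ConnectedComponents.surjective_coe c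
    rfl

section Aux

open Topology

universe v

variable {X : Type v} [TopologicalSpace X]

theorem mem_connectedComponent_subtype {F : Set X} {x y : X} (hx : x ∈ F) (hy : y ∈ F)
    (h : y ∈ connectedComponentIn F x) :
    (⟨y, hy⟩ : F) ∈ connectedComponent (⟨x, hx⟩ : F) := by
  rw [connectedComponentIn_eq_image hx] at h
  obtain ⟨z, hz, hzy⟩ := h
  rwa [show (⟨y, hy⟩ : F) = z from Subtype.ext hzy.symm]

theorem reebRel_equivalence (f : X → ℝ) : Equivalence (ReebRel f) where
  refl x := mem_connectedComponentIn rfl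
  symm {x y} h := by
    have hfe : f y = f x := (ReebRel.apply_eq h).symm
    have h2 : connectedComponentIn (f ⁻¹' {f x}) x = connectedComponentIn (f ⁻¹' {f x}) y :=
      connectedComponentIn_eq h
    show x ∈ connectedComponentIn (f ⁻¹' {f y}) y
    rw [hfe, ← h2]
    exact mem_connectedComponentIn rfl
  trans {x y z} hxy hyz := by
    have hfe : f y = f x := (ReebRel.apply_eq hxy).symm
    have h2 : connectedComponentIn (f ⁻¹' {f x}) x = connectedComponentIn (f ⁻¹' {f x}) y :=
      connectedComponentIn_eq hxy
    show z ∈ connectedComponentIn (f ⁻¹' {f x}) x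
    rw [h2, ← hfe]
    exact hyz

theorem continuous_reebTilde {f : X → ℝ} (hf : Continuous f) : Continuous (reebTilde f) :=
  continuous_quot_lift _ hf

/-- The restriction of the Reeb quotient map to the preimage of an interval. -/
def qres (f : X → ℝ) (I : RInt) : ↥(f ⁻¹' I.set) → ↥(reebTilde f ⁻¹' I.set) :=
  fun x => ⟨Quot.mk _ x.1, x.2⟩

theorem qres_continuous (f : X → ℝ) (I : RInt) : Continuous (qres f I) :=
  Continuous.subtype_mk (continuous_quot_mk.comp continuous_subtype_val) _

theorem qres_isQuotientMap {f : X → ℝ} (hf : Continuous f) (I : RInt) :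
    IsQuotientMap (qres f I) :=
  isQuotientMap_quot_mk.restrictPreimage_isOpen (isOpen_Ioo.preimage (continuous_reebTilde hf))

/-- The map induced by `qres` on connected components. -/
noncomputable def qcc (f : X → ℝ) (I : RInt) :
    ConnectedComponents ↥(f ⁻¹' I.set) → ConnectedComponents ↥(reebTilde f ⁻¹' I.set) :=
  (qres_continuous f I).connectedComponentsMap

theorem qcc_surjective (f : X → ℝ) (I : RInt) : Function.Surjective (qcc f I) := by
  intro c
  obtain ⟨s, rfl⟩ := ConnectedComponents.surjective_coe c
  obtain ⟨z, hz⟩ := s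
  obtain ⟨y, rfl⟩ := Quot.exists_rep z
  exact ⟨ConnectedComponents.mk ⟨y, hz⟩, rfl⟩

/-- A (noncanonical) section on points, used to prove injectivity of `qcc`. -/
noncomputable def qsec (f : X → ℝ) (I : RInt) :
    ↥(reebTilde f ⁻¹' I.set) → ConnectedComponents ↥(f ⁻¹' I.set) :=
  fun s => ConnectedComponents.mk ⟨(Quot.exists_rep s.1).choose, by
    have h := (Quot.exists_rep s.1).choose_spec
    have hs : reebTilde f s.1 ∈ I.set := s.2
    rw [← h] at hs
    exact hs⟩

theorem qsec_comp (f : X → ℝ) (I : RInt) (x : ↥(f ⁻¹' I.set)) :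
    qsec f I (qres f I x) = ConnectedComponents.mk x := by
  have hspec : Quot.mk (ReebRel f) ((Quot.exists_rep (qres f I x).1).choose) =
      Quot.mk (ReebRel f) x.1 := (Quot.exists_rep (qres f I x).1).choose_spec
  have hrel : ReebRel f x.1 ((Quot.exists_rep (qres f I x).1).choose) :=
    ((reebRel_equivalence f).eqvGen_iff).1 (Quot.eqvGen_exact hspec.symm)
  have hmem : (Quot.exists_rep (qres f I x).1).choose ∈
      connectedComponentIn (f ⁻¹' I.set) x.1 := by
    refine connectedComponentIn_mono x.1 ?_ hrel
    intro z hz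
    show f z ∈ I.set
    rw [show f z = f x.1 from hz]
    exact x.2
  exact ConnectedComponents.coe_eq_coe'.2
    (mem_connectedComponent_subtype x.2 ((connectedComponentIn_subset _ _) hmem) hmem)

theorem qsec_continuous {f : X → ℝ} (hf : Continuous f) (I : RInt) :
    Continuous (qsec f I) := by
  rw [(qres_isQuotientMap hf I).continuous_iff]
  have he : (qsec f I) ∘ (qres f I) = ConnectedComponents.mk := funext (qsec_comp f I)
  rw [he]
  exact ConnectedComponents.continuous_coe

theorem qcc_injective {f : X → ℝ} (hf : Continuous f) (I : RInt) :
    Function.Injective (qcc f I) := by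
  intro c d h
  obtain ⟨a, rfl⟩ := ConnectedComponents.surjective_coe c
  obtain ⟨b, rfl⟩ := ConnectedComponents.surjective_coe d
  have h' : ConnectedComponents.mk (qres f I a) = ConnectedComponents.mk (qres f I b) := h
  have hcomp := ConnectedComponents.coe_eq_coe.1 h'
  have he := Continuous.image_eq_of_connectedComponent_eq (qsec_continuous hf I) _ _ hcomp
  rw [qsec_comp, qsec_comp] at he
  exact he

/-- The natural isomorphism between the Reeb precosheaf of `f` and that of the induced
map on the Reeb quotient. -/
noncomputable def reebQuotIso {f : X → ℝ} (hf : Continuous f) :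
    reebPrecosheaf f ≅ reebPrecosheaf (reebTilde f) :=
  NatIso.ofComponents
    (fun I => (Equiv.ofBijective (qcc f I) ⟨qcc_injective hf I, qcc_surjective f I⟩).toIso)
    (by
      intro I J h
      ext c
      obtain ⟨x, rfl⟩ := ConnectedComponents.surjective_coe c
      rfl)

/-- Interleavings transport across natural isomorphisms. -/
theorem IsInterleaving.of_iso {A : Type*} [Category A] {δ : ℝ≥0} {C C' D D' : RInt ⥤ A}
    (eC : C ≅ C') (eD : D ≅ D') (h : IsInterleaving δ C D) : IsInterleaving δ C' D' := by
  obtain ⟨Φ, Ψ, h1, h2⟩ := h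
  refine ⟨eC.inv ≫ Φ ≫ Functor.whiskerLeft (widenFunctor δ) eD.hom,
      eD.inv ≫ Ψ ≫ Functor.whiskerLeft (widenFunctor δ) eC.hom, fun I => ?_, fun I => ?_⟩
  · simp only [NatTrans.comp_app, Functor.whiskerLeft_app, Category.assoc, Iso.hom_inv_id_app_assoc]
    rw [reassoc_of% (h1 I)]
    exact NatIso.naturality_1 eC _
  · simp only [NatTrans.comp_app, Functor.whiskerLeft_app, Category.assoc, Iso.hom_inv_id_app_assoc]
    rw [reassoc_of% (h2 I)]
    exact NatIso.naturality_1 eD _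

end Aux

theorem base_interleaving {Y : Type u} [TopologicalSpace Y] (A : Set Y) (g : Y → ℝ)
    (hg : Continuous g) (H : Y × unitInterval → Y) (hH : Continuous H)
    (h0 : ∀ y, H (y, 0) = y) (h1mem : ∀ y, H (y, 1) ∈ A)
    (h1fix : ∀ x ∈ A, H (x, 1) = x)
    (hpath : ∀ y t, H (H (y, t), 1) = H (y, 1)) (δ : ℝ≥0)
    (hδ : ∀ y, |g y - g (H (y, 1))| ≤ (δ : ℝ)) :
    IsInterleaving δ (reebPrecosheaf g) (reebPrecosheaf (fun a : A => g a)) := by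
  have hδ0 : (0 : ℝ) ≤ δ := δ.2
  -- the retraction-type map on sublevel sets
  have humem : ∀ (I : RInt) (x : ↥(g ⁻¹' I.set)),
      (fun a : A => g a) ⟨H (x.1, 1), h1mem x.1⟩ ∈ (RInt.widen δ I).set := by
    intro I x
    obtain ⟨hx1, hx2⟩ := x.2
    obtain ⟨ha, hb⟩ := abs_le.1 (hδ x.1)
    exact ⟨by dsimp [RInt.widen]; linarith, by dsimp [RInt.widen]; linarith⟩
  have hu : ∀ I : RInt, Continuous (fun x : ↥(g ⁻¹' I.set) =>
      (⟨⟨H (x.1, 1), h1mem x.1⟩, humem I x⟩ :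
        ↥((fun a : A => g a) ⁻¹' (RInt.widen δ I).set))) := fun I =>
    Continuous.subtype_mk (Continuous.subtype_mk
      (hH.comp (continuous_subtype_val.prodMk continuous_const)) _) _
  -- the inclusion on sublevel sets
  have hvmem : ∀ (I : RInt) (x : ↥((fun a : A => g a) ⁻¹' I.set)),
      (x.1.1 : Y) ∈ g ⁻¹' (RInt.widen δ I).set := by
    intro I x
    obtain ⟨hx1, hx2⟩ := x.2
    exact ⟨by dsimp [RInt.widen]; linarith, by dsimp [RInt.widen]; linarith⟩
  have hv : ∀ I : RInt, Continuous (fun x : ↥((fun a : A => g a) ⁻¹' I.set) =>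
      (⟨x.1.1, hvmem I x⟩ : ↥(g ⁻¹' (RInt.widen δ I).set))) := fun I =>
    Continuous.subtype_mk (continuous_subtype_val.comp continuous_subtype_val) _
  refine ⟨⟨fun I => TypeCat.ofHom (hu I).connectedComponentsMap, ?_⟩,
      ⟨fun I => TypeCat.ofHom (hv I).connectedComponentsMap, ?_⟩, fun I => ?_, fun I => ?_⟩
  · intro I J h
    ext c
    obtain ⟨x, rfl⟩ := ConnectedComponents.surjective_coe c
    rfl
  · intro I J h
    ext c
    obtain ⟨x, rfl⟩ := ConnectedComponents.surjective_coe c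
    rfl
  · -- Φ ≫ Ψ = connecting map, via the homotopy
    ext c
    obtain ⟨x, rfl⟩ := ConnectedComponents.surjective_coe c
    show (ConnectedComponents.mk
        (⟨H (x.1, 1), _⟩ : ↥(g ⁻¹' (RInt.widen δ (RInt.widen δ I)).set))) =
      ConnectedComponents.mk ⟨x.1, _⟩
    set F : Set Y := g ⁻¹' (RInt.widen δ (RInt.widen δ I)).set with hF
    have hpc : IsPreconnected ((fun t : unitInterval => H (x.1, t)) '' Set.univ) :=
      isPreconnected_univ.image _ ((hH.comp (continuous_const.prodMk continuous_id)).continuousOn)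
    have hsubset : (fun t : unitInterval => H (x.1, t)) '' Set.univ ⊆ F := by
      rintro _ ⟨t, -, rfl⟩
      obtain ⟨hx1, hx2⟩ := x.2
      have e1 := hδ (H (x.1, t))
      rw [hpath x.1 t] at e1
      obtain ⟨ha1, hb1⟩ := abs_le.1 e1
      obtain ⟨ha2, hb2⟩ := abs_le.1 (hδ x.1)
      show g (H (x.1, t)) ∈ (RInt.widen δ (RInt.widen δ I)).set
      exact ⟨by dsimp [RInt.widen]; linarith, by dsimp [RInt.widen]; linarith⟩
    have hx_mem : x.1 ∈ (fun t : unitInterval => H (x.1, t)) '' Set.univ :=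
      ⟨0, Set.mem_univ _, h0 x.1⟩
    have hH1_mem : H (x.1, 1) ∈ (fun t : unitInterval => H (x.1, t)) '' Set.univ :=
      ⟨1, Set.mem_univ _, rfl⟩
    have hccin : H (x.1, 1) ∈ connectedComponentIn F x.1 :=
      hpc.subset_connectedComponentIn hx_mem hsubset hH1_mem
    exact ConnectedComponents.coe_eq_coe'.2
      (mem_connectedComponent_subtype (hsubset hx_mem) (hsubset hH1_mem) hccin)
  · -- Ψ ≫ Φ = connecting map, by fixing `A` pointwise
    ext c
    obtain ⟨x, rfl⟩ := ConnectedComponents.surjective_coe c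
    exact congrArg ConnectedComponents.mk (Subtype.ext (Subtype.ext (h1fix x.1.1 x.1.2)))

theorem stmt18 {Y : Type u} [TopologicalSpace Y] (A : Set Y) (g : Y → ℝ)
    (hg : Continuous g) (H : Y × unitInterval → Y) (hH : Continuous H)
    (h0 : ∀ y, H (y, 0) = y) (h1mem : ∀ y, H (y, 1) ∈ A)
    (h1fix : ∀ x ∈ A, H (x, 1) = x)
    (hpath : ∀ y t, H (H (y, t), 1) = H (y, 1)) :
    interleavingDist (reebPrecosheaf (reebTilde g))
        (reebPrecosheaf (reebTilde (fun a : A => g a))) ≤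
      ⨆ y : Y, ENNReal.ofReal |g y - g (H (y, 1))| := by
  set S := ⨆ y : Y, ENNReal.ofReal |g y - g (H (y, 1))| with hS
  rcases eq_or_ne S ⊤ with htop | htop
  · rw [htop]; exact le_top
  · set δ := S.toNNReal with hδdef
    have hcoe : (δ : ℝ≥0∞) = S := ENNReal.coe_toNNReal htop
    have hδ : ∀ y, |g y - g (H (y, 1))| ≤ (δ : ℝ) := by
      intro y
      have h1 : ENNReal.ofReal |g y - g (H (y, 1))| ≤ (δ : ℝ≥0∞) := by
        rw [hcoe]; exact le_iSup (fun y => ENNReal.ofReal |g y - g (H (y, 1))|) y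
      rw [← ENNReal.ofReal_coe_nnreal] at h1
      exact (ENNReal.ofReal_le_ofReal_iff δ.2).1 h1
    have hbase := base_interleaving A g hg H hH h0 h1mem h1fix hpath δ hδ
    have hint : IsInterleaving δ (reebPrecosheaf (reebTilde g))
        (reebPrecosheaf (reebTilde (fun a : A => g a))) :=
      IsInterleaving.of_iso (reebQuotIso hg)
        (reebQuotIso (hg.comp continuous_subtype_val)) hbase
    exact le_trans (iInf₂_le δ hint) hcoe.le
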